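/- Define f_{b,c}(X,Y,Z) = b x₁z₁ X Z + y₁ Y (c − Z) and G = f_{b,a}(X,Y,X) f_{b,c}(X,Y,Z) + f_{b,0}(X,Y,−1) x₁z₁X²YZ. The six-dimensional parametric DNLS map T_{a,b,c}(x₁,X,y₁,Y,z₁,Z) = (u₁,U,v₁,V,w₁,W) with u₁ = f_{b,c}(X,Y,Z)·(f_{b,a}(X,Y,X) f_{b,c}(X,Y,Z) + f_{b,0}(X,Y,−1) x₁z₁X²YZ)/(a c² x₁y₁z₁² X²Y²Z), U = a c x₁y₁z₁ X²Y²/G, v₁ = x₁y₁z₁XYZ f_{b,0}(X,Y,−1)/G, V = G/(a c x₁y₁z₁ XY), w₁ = f_{b,a}(X,Y,X)/(a x₁ XY), W = a c x₁y₁z₁ XY²Z/G admits the invariants I₁ = X/Z, I₂ = XY, and I₃ = Z − bX − aYZ + y₁Y(a−X)(c−Z)/(x₁z₁XZ) − x₁z₁XZ(b−Y)/(y₁Y): i.e. U/W = X/Z, UV = XY, and W − bU − aVW + v₁V(a−U)(c−W)/(u₁w₁UW) − u₁w₁UW(b−V)/(v₁V) = Z − bX − aYZ + y₁Y(a−X)(c−Z)/(x₁z₁XZ)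 − x₁z₁XZ(b−Y)/(y₁Y). -/

import Mathlib

set_option linter.unusedVariables false

/- STATEMENT 17: Invariants I₁ = X/Z, I₂ = XY, I₃ of the six-dimensional parametric DNLS map. -/

/-- `fD b c x1 y1 z1 X Y Z = b x₁z₁XZ + y₁Y(c−Z)`. -/
noncomputable def fD (b c x1 y1 z1 X Y Z : ℂ) : ℂ :=
  b*x1*z1*X*Z + y1*Y*(c - Z)

/-- `G = f_{b,a}(X,Y,X) f_{b,c}(X,Y,Z) + f_{b,0}(X,Y,−1) x₁z₁X²YZ`. -/
noncomputable def Gd (a b c x1 X y1 Y z1 Z : ℂ) : ℂ :=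
  fD b a x1 y1 z1 X Y X * fD b c x1 y1 z1 X Y Z
    + fD b 0 x1 y1 z1 X Y (-1) * x1*z1*X^2*Y*Z

noncomputable def u1f (a b c x1 X y1 Y z1 Z : ℂ) : ℂ :=
  fD b c x1 y1 z1 X Y Z * Gd a b c x1 X y1 Y z1 Z
    /(a*c^2*x1*y1*z1^2*X^2*Y^2*Z)
noncomputable def Uf (a b c x1 X y1 Y z1 Z : ℂ) : ℂ :=
  a*c*x1*y1*z1*X^2*Y^2/(Gd a b c x1 X y1 Y z1 Z)
noncomputable def v1f (a b c x1 X y1 Y z1 Z : ℂ) : ℂ :=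
  x1*y1*z1*X*Y*Z*fD b 0 x1 y1 z1 X Y (-1)/(Gd a b c x1 X y1 Y z1 Z)
noncomputable def Vf (a b c x1 X y1 Y z1 Z : ℂ) : ℂ :=
  Gd a b c x1 X y1 Y z1 Z/(a*c*x1*y1*z1*X*Y)
noncomputable def w1f (a b c x1 X y1 Y z1 Z : ℂ) : ℂ :=
  fD b a x1 y1 z1 X Y X/(a*x1*X*Y)
noncomputable def Wf (a b c x1 X y1 Y z1 Z : ℂ) : ℂ :=
  a*c*x1*y1*z1*X*Y^2*Z/(Gd a b c x1 X y1 Y z1 Z)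

private lemma combo (p q r s t u v G K L M N : ℂ)
    (hG : G ≠ 0) (hK : K ≠ 0) (hL : L ≠ 0) (hM : M ≠ 0) (hN : N ≠ 0)
    (h : p*(K*L*M*N) - q*(G*K*L*M*N) + r*(L*M*N) - s*(K*M*N)
      = t*(G*K*L*M*N) + u*(G*K*L*N) - v*(G*K*L*M)) :
    p/G - q + r/(G*K) - s/(G*L) = t + u/M - v/N := by
  field_simp
  linear_combination h

set_option maxHeartbeats 2000000 in
theorem dnls6d_invariants (a b c x1 X y1 Y z1 Z : ℂ)
    (ha : a ≠ 0) (hb : b ≠ 0) (hc : c ≠ 0)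
    (hx1 : x1 ≠ 0) (hX : X ≠ 0) (hy1 : y1 ≠ 0) (hY : Y ≠ 0)
    (hz1 : z1 ≠ 0) (hZ : Z ≠ 0)
    (hG : Gd a b c x1 X y1 Y z1 Z ≠ 0)
    (hu1 : u1f a b c x1 X y1 Y z1 Z ≠ 0)
    (hv1 : v1f a b c x1 X y1 Y z1 Z ≠ 0)
    (hw1 : w1f a b c x1 X y1 Y z1 Z ≠ 0) :
    Uf a b c x1 X y1 Y z1 Z / Wf a b c x1 X y1 Y z1 Z = X/Z ∧
    Uf a b c x1 X y1 Y z1 Z * Vf a b c x1 X y1 Y z1 Z = X*Y ∧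
    Wf a b c x1 X y1 Y z1 Z - b*Uf a b c x1 X y1 Y z1 Z
      - a*Vf a b c x1 X y1 Y z1 Z*Wf a b c x1 X y1 Y z1 Z
      + v1f a b c x1 X y1 Y z1 Z*Vf a b c x1 X y1 Y z1 Z
        *(a - Uf a b c x1 X y1 Y z1 Z)*(c - Wf a b c x1 X y1 Y z1 Z)
        /(u1f a b c x1 X y1 Y z1 Z*w1f a b c x1 X y1 Y z1 Z
          *Uf a b c x1 X y1 Y z1 Z*Wf a b c x1 X y1 Y z1 Z)
      - u1f a b c x1 X y1 Y z1 Z*w1f a b c x1 X y1 Y z1 Z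
        *Uf a b c x1 X y1 Y z1 Z*Wf a b c x1 X y1 Y z1 Z
        *(b - Vf a b c x1 X y1 Y z1 Z)
        /(v1f a b c x1 X y1 Y z1 Z*Vf a b c x1 X y1 Y z1 Z)
      = Z - b*X - a*Y*Z + y1*Y*(a - X)*(c - Z)/(x1*z1*X*Z)
        - x1*z1*X*Z*(b - Y)/(y1*Y) := by
  have hfc : fD b c x1 y1 z1 X Y Z ≠ 0 := by
    intro h; apply hu1; simp [u1f, h]
  have hfa : fD b a x1 y1 z1 X Y X ≠ 0 := by
    intro h; apply hw1; simp [w1f, h]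
  have hf0 : fD b 0 x1 y1 z1 X Y (-1) ≠ 0 := by
    intro h; apply hv1; simp [v1f, h]
  have hD2 : a*c*x1*y1*z1*X*Y ≠ 0 := by
    simp [mul_eq_zero, ha, hc, hx1, hy1, hz1, hX, hY]
  have hWne : Wf a b c x1 X y1 Y z1 Z ≠ 0 := by
    unfold Wf
    exact div_ne_zero (by simp [mul_eq_zero, pow_eq_zero_iff, ha, hc, hx1, hy1, hz1, hX, hY, hZ]) hG
  refine ⟨?_, ?_, ?_⟩
  · rw [div_eq_div_iff hWne hZ]
    unfold Uf Wf
    field_simp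
  · unfold Uf Vf
    rw [div_mul_div_comm, div_eq_iff (mul_ne_zero hG hD2)]
    ring
  · have e1 : u1f a b c x1 X y1 Y z1 Z*w1f a b c x1 X y1 Y z1 Z
        *Uf a b c x1 X y1 Y z1 Z*Wf a b c x1 X y1 Y z1 Z
        = fD b c x1 y1 z1 X Y Z * fD b a x1 y1 z1 X Y X * (y1*Y)
          / Gd a b c x1 X y1 Y z1 Z := by
      rw [eq_div_iff hG]
      unfold u1f w1f Uf Wf
      rw [div_mul_div_comm, div_mul_div_comm, div_mul_div_comm, div_mul_eq_mul_div,
        div_eq_iff (by simp [mul_eq_zero, pow_eq_zero_iff, ha, hb, hc, hx1, hX, hy1, hY, hz1, hZ, hG, hfa, hfc, hf0])]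
      ring
    have e2 : v1f a b c x1 X y1 Y z1 Z*Vf a b c x1 X y1 Y z1 Z
        = fD b 0 x1 y1 z1 X Y (-1) * Z/(a*c) := by
      unfold v1f Vf
      field_simp
    have e3 : a*Vf a b c x1 X y1 Y z1 Z*Wf a b c x1 X y1 Y z1 Z = a*Y*Z := by
      unfold Vf Wf
      field_simp
    have e4 : Wf a b c x1 X y1 Y z1 Z - b*Uf a b c x1 X y1 Y z1 Z
        = (a*c*x1*y1*z1*X*Y^2*Z - a*b*c*x1*y1*z1*X^2*Y^2)/Gd a b c x1 X y1 Y z1 Z := by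
      unfold Uf Wf
      field_simp
    have e5 : a - Uf a b c x1 X y1 Y z1 Z
        = (a*Gd a b c x1 X y1 Y z1 Z - a*c*x1*y1*z1*X^2*Y^2)/Gd a b c x1 X y1 Y z1 Z := by
      unfold Uf
      field_simp
    have e6 : c - Wf a b c x1 X y1 Y z1 Z
        = (c*Gd a b c x1 X y1 Y z1 Z - a*c*x1*y1*z1*X*Y^2*Z)/Gd a b c x1 X y1 Y z1 Z := by
      unfold Wf
      field_simp
    have e7 : b - Vf a b c x1 X y1 Y z1 Z
        = (a*b*c*x1*y1*z1*X*Y - Gd a b c x1 X y1 Y z1 Z)/(a*c*x1*y1*z1*X*Y) := by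
      unfold Vf
      field_simp
    have e8 : v1f a b c x1 X y1 Y z1 Z*Vf a b c x1 X y1 Y z1 Z
        *(a - Uf a b c x1 X y1 Y z1 Z)*(c - Wf a b c x1 X y1 Y z1 Z)
        /(u1f a b c x1 X y1 Y z1 Z*w1f a b c x1 X y1 Y z1 Z
          *Uf a b c x1 X y1 Y z1 Z*Wf a b c x1 X y1 Y z1 Z)
        = fD b 0 x1 y1 z1 X Y (-1)*Z
            *(a*Gd a b c x1 X y1 Y z1 Z - a*c*x1*y1*z1*X^2*Y^2)
            *(c*Gd a b c x1 X y1 Y z1 Z - a*c*x1*y1*z1*X*Y^2*Z)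
          /(Gd a b c x1 X y1 Y z1 Z*(a*c*fD b c x1 y1 z1 X Y Z
            *fD b a x1 y1 z1 X Y X*(y1*Y))) := by
      rw [e2, e5, e6, e1]
      rw [div_mul_div_comm, div_mul_div_comm, div_div_eq_mul_div, div_mul_eq_mul_div,
        div_div, div_eq_div_iff
          (by simp [mul_eq_zero, ha, hc, hy1, hY, hG, hfa, hfc])
          (by simp [mul_eq_zero, ha, hc, hy1, hY, hG, hfa, hfc])]
      ring
    have e9 : u1f a b c x1 X y1 Y z1 Z*w1f a b c x1 X y1 Y z1 Z
        *Uf a b c x1 X y1 Y z1 Z*Wf a b c x1 X y1 Y z1 Z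
        *(b - Vf a b c x1 X y1 Y z1 Z)
        /(v1f a b c x1 X y1 Y z1 Z*Vf a b c x1 X y1 Y z1 Z)
        = fD b c x1 y1 z1 X Y Z*fD b a x1 y1 z1 X Y X
            *(a*b*c*x1*y1*z1*X*Y - Gd a b c x1 X y1 Y z1 Z)
          /(Gd a b c x1 X y1 Y z1 Z*(fD b 0 x1 y1 z1 X Y (-1)*(x1*z1*X*Z))) := by
      rw [e1, e7, e2]
      rw [div_mul_div_comm, div_div_eq_mul_div, div_mul_eq_mul_div,
        div_div, div_eq_div_iff
          (by simp [mul_eq_zero, ha, hc, hx1, hy1, hz1, hX, hY, hZ, hG, hf0])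
          (by simp [mul_eq_zero, ha, hc, hx1, hy1, hz1, hX, hY, hZ, hG, hf0])]
      ring
    rw [e3, e4, e8, e9]
    exact combo _ _ _ _ _ _ _ _ _ _ _ _ hG
      (by simp [mul_eq_zero, ha, hc, hy1, hY, hfa, hfc])
      (by simp [mul_eq_zero, hx1, hz1, hX, hZ, hf0])
      (by simp [mul_eq_zero, hx1, hz1, hX, hZ])
      (by simp [mul_eq_zero, hy1, hY])
      (by unfold Gd fD; ring)
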